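/- For every Steiner tree T (a tree in G containing all terminals R) and every Steiner partition π of V (a partition each of whose parts contains at least one terminal), the incidence vector x of T satisfies Σ_{e ∈ E_π} x_e ≥ r(π) − 1. -/

import Mathlib

open scoped Classical

private lemma walk_cross {W α : Type*} {H : SimpleGraph W} (f : W → α) :
    ∀ {u v : W}, H.Walk u v → f u ≠ f v → ∃ a b, H.Adj a b ∧ f a ≠ f b := by
  intro u v w
  induction w with
  | nil => exact fun h => absurd rfl h
  | @cons u x v h p ih =>
      intro hne
      by_cases hux : f u = f x
      · exact ih (hux ▸ hne)
      · exact ⟨u, x, h, hux⟩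

private lemma cross_lemma {W α : Type*} [Fintype W] [DecidableEq α] (H : SimpleGraph W)
    (hH : H.Preconnected) :
    ∀ (n : ℕ) (f : W → α), (Finset.univ.image f).card ≤ n →
      (Finset.univ.image f).card ≤
        ({e ∈ H.edgeSet | ∃ a ∈ e, ∃ b ∈ e, f a ≠ f b}).ncard + 1 := by
  intro n
  induction n with
  | zero => intro f hf; omega
  | succ n ih =>
    intro f hf
    by_cases hcase : (Finset.univ.image f).card ≤ n
    · exact ih f hcase
    push_neg at hcase
    have hcard : (Finset.univ.image f).card = n + 1 := le_antisymm hf hcase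
    rcases Nat.eq_zero_or_pos n with rfl | hn
    · omega
    obtain ⟨c, hc, d, hd, hcd⟩ := Finset.one_lt_card.mp
      (by omega : 1 < (Finset.univ.image f).card)
    obtain ⟨u, -, rfl⟩ := Finset.mem_image.mp hc
    obtain ⟨v, -, rfl⟩ := Finset.mem_image.mp hd
    obtain ⟨a, b, hab, hfab⟩ := walk_cross f ((hH u v).some) hcd
    set g : W → α := fun x => if f x = f b then f a else f x with hg
    have hga : g a = f a := by simp [hg]
    have hgb : g b = f a := by simp [hg]
    have himg : Finset.univ.image g = (Finset.univ.image f).erase (f b) := by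
      ext c
      simp only [Finset.mem_image, Finset.mem_erase, Finset.mem_univ, true_and]
      constructor
      · rintro ⟨x, rfl⟩
        by_cases hx : f x = f b
        · refine ⟨?_, a, ?_⟩ <;> simp [hg, hx, hfab]
        · exact ⟨by simp [hg, hx], x, by simp [hg, hx]⟩
      · rintro ⟨hcb, x, rfl⟩
        exact ⟨x, by simp [hg, hcb]⟩
    have hcardg : (Finset.univ.image g).card = n := by
      rw [himg, Finset.card_erase_of_mem (Finset.mem_image_of_mem f (Finset.mem_univ b)),
        hcard]
      omega
    have hmemCf : s(a, b) ∈ {e ∈ H.edgeSet | ∃ a ∈ e, ∃ b ∈ e, f a ≠ f b} :=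
      ⟨hab, a, Sym2.mem_mk_left a b, b, Sym2.mem_mk_right a b, hfab⟩
    have hnot : s(a, b) ∉ {e ∈ H.edgeSet | ∃ a ∈ e, ∃ b ∈ e, g a ≠ g b} := by
      rintro ⟨-, x, hx, y, hy, hxy⟩
      rcases Sym2.mem_iff.mp hx with rfl | rfl <;>
        rcases Sym2.mem_iff.mp hy with rfl | rfl <;>
        simp_all
    have hsub : insert s(a, b) {e ∈ H.edgeSet | ∃ a ∈ e, ∃ b ∈ e, g a ≠ g b} ⊆
        {e ∈ H.edgeSet | ∃ a ∈ e, ∃ b ∈ e, f a ≠ f b} := by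
      rintro e (rfl | ⟨he, x, hx, y, hy, hxy⟩)
      · exact hmemCf
      · refine ⟨he, x, hx, y, hy, fun hfxy => hxy ?_⟩
        simp [hg, hfxy]
    have hins : ({e ∈ H.edgeSet | ∃ a ∈ e, ∃ b ∈ e, g a ≠ g b}).ncard + 1 =
        (insert s(a, b) {e ∈ H.edgeSet | ∃ a ∈ e, ∃ b ∈ e, g a ≠ g b}).ncard :=
      (Set.ncard_insert_of_notMem hnot (Set.toFinite _)).symm
    have hle := Set.ncard_le_ncard hsub (Set.toFinite _)
    have := ih g (le_of_eq hcardg)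
    omega

/-- (Steiner partition inequality, Chopra–Rao.) For every Steiner tree
`T` (a subtree of `G` containing all terminals `R`) and every Steiner partition `π` of
`V` (each part contains a terminal), the incidence vector of `T` satisfies
`∑_{e ∈ E_π} x_e ≥ r(π) - 1`. -/
theorem stmt2 {V : Type*} [Fintype V] (G : SimpleGraph V) (R : Finset V)
    (T : G.Subgraph) (hT : T.coe.IsTree) (hR : (R : Set V) ⊆ T.verts)
    (π : Finpartition (⊤ : Finset V))
    (hπ : ∀ P ∈ π.parts, ∃ t ∈ R, t ∈ P) :
    (π.parts.card : ℝ) - 1 ≤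
      ({e ∈ T.edgeSet | ¬ ∃ P ∈ π.parts, ∀ v ∈ e, v ∈ P}).ncard := by
  haveI : Fintype T.verts := Fintype.ofFinite _
  set f : T.verts → Finset V := fun v => π.part v.1 with hf
  have hPre : T.coe.Preconnected := hT.isConnected.preconnected
  have himg : Finset.univ.image f = π.parts := by
    ext P
    simp only [Finset.mem_image, Finset.mem_univ, true_and]
    constructor
    · rintro ⟨v, rfl⟩; exact π.part_mem.mpr (by simp)
    · intro hP
      obtain ⟨t, htR, htP⟩ := hπ P hP
      exact ⟨⟨t, hR htR⟩, π.part_eq_of_mem hP htP⟩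
  have key := cross_lemma T.coe hPre π.parts.card f (le_of_eq (congrArg Finset.card himg))
  rw [himg] at key
  set C : Set (Sym2 T.verts) := {e ∈ T.coe.edgeSet | ∃ a ∈ e, ∃ b ∈ e, f a ≠ f b} with hC
  set D : Set (Sym2 V) := {e ∈ T.edgeSet | ¬ ∃ P ∈ π.parts, ∀ v ∈ e, v ∈ P} with hD
  have hsub : Sym2.map (Subtype.val) '' C ⊆ D := by
    rintro e' ⟨e, he, rfl⟩
    revert he
    induction e using Sym2.ind with
    | _ x y =>
      rintro ⟨he, a, ha, b, hb, hfab⟩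
      have hadj : T.Adj x.1 y.1 := (SimpleGraph.Subgraph.coe_adj T x y).mp he
      refine ⟨SimpleGraph.Subgraph.mem_edgeSet.mpr hadj, ?_⟩
      have hxy : f x ≠ f y := by
        rcases Sym2.mem_iff.mp ha with rfl | rfl <;>
          rcases Sym2.mem_iff.mp hb with rfl | rfl
        · exact absurd rfl hfab
        · exact hfab
        · exact fun h => hfab h.symm
        · exact absurd rfl hfab
      rintro ⟨P, hP, hall⟩
      have h1 : π.part x.1 = P :=
        π.part_eq_of_mem hP (hall x.1 (Sym2.mem_mk_left _ _))
      have h2 : π.part y.1 = P :=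
        π.part_eq_of_mem hP (hall y.1 (Sym2.mem_mk_right _ _))
      exact hxy (h1.trans h2.symm)
  have hinj : Function.Injective (Sym2.map (Subtype.val : T.verts → V)) :=
    Sym2.map.injective Subtype.val_injective
  have h1 : C.ncard = (Sym2.map (Subtype.val) '' C).ncard :=
    (Set.ncard_image_of_injective _ hinj).symm
  have h2 : (Sym2.map (Subtype.val) '' C).ncard ≤ D.ncard :=
    Set.ncard_le_ncard hsub (Set.toFinite _)
  have hfinal : π.parts.card ≤ D.ncard + 1 := by omega
  have : (π.parts.card : ℝ) ≤ (D.ncard : ℝ) + 1 := by exact_mod_cast hfinal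
  linarith
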